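/- Let l ∈ ℕ, let (S_i,+) for i = 1,…,l be countable adequate commutative partial semigroups, and for each i let ⟨y_{i,n}⟩_{n=1}^∞ be an adequate sequence in S_i. Let C be an IP* set in S_1 × … × S_l and let m ∈ ℕ. Then for each i ∈ {1,…,l} there is a weak product subsystem ⟨x_{i,n}⟩_{n=1}^m of ⟨y_{i,n}⟩_{n=1}^∞ such that ×_{i=1}^l FS(⟨x_{i,n}⟩_{n=1}^m) ⊆ C. -/

import Mathlib

attribute [local instance] Ultrafilter.mul Ultrafilter.semigroup

namespace PS

variable {S : Type*}

/-- Left-to-right sum of a list in a partial semigroup (`none` on the empty list). -/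
def listSum (P : S → S → Option S) : List S → Option S
  | [] => none
  | [a] => some a
  | a :: b :: l => (listSum P (b :: l)).bind fun t => P a t

/-- The partial sum `∑_{t ∈ H} y t`, taken in increasing order of the indices. -/
def fsum (P : S → S → Option S) (y : ℕ → S) (H : Finset ℕ) : Option S :=
  listSum P ((H.sort (· ≤ ·)).map y)

/-- Associativity of a partial operation, in the strong (Kleene) sense. -/
def Assoc (P : S → S → Option S) : Prop :=
  ∀ a b c : S, (P a b).bind (fun t => P t c) = (P b c).bind fun t => P a t

/-- Commutativity: `a + b = b + a` whenever either side is defined. -/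
def Comm (P : S → S → Option S) : Prop := ∀ a b : S, P a b = P b a

/-- `φ(s) = {t : s + t is defined}`. -/
def phi (P : S → S → Option S) (s : S) : Set S := {t | (P s t).isSome}

/-- `σ(H) = ⋂_{s ∈ H} φ(s)`. -/
def sigma (P : S → S → Option S) (H : Finset S) : Set S :=
  {t | ∀ s ∈ H, (P s t).isSome = true}

/-- An adequate partial semigroup: `σ(H) ≠ ∅` for all finite nonempty `H`. -/
def Adequate (P : S → S → Option S) : Prop :=
  ∀ H : Finset S, H.Nonempty → (sigma P H).Nonempty

/-- `FS(⟨x_n⟩_{n=m}^∞)`. -/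
def FSfrom (P : S → S → Option S) (x : ℕ → S) (m : ℕ) : Set S :=
  {s | ∃ H : Finset ℕ, H.Nonempty ∧ (∀ n ∈ H, m ≤ n) ∧ fsum P x H = some s}

/-- `FS` of the first `m` terms of a sequence. -/
def FSfin (P : S → S → Option S) (x : ℕ → S) (m : ℕ) : Set S :=
  {s | ∃ H : Finset ℕ, H.Nonempty ∧ H ⊆ Finset.range m ∧ fsum P x H = some s}

/-- An adequate sequence. -/
def AdequateSeq (P : S → S → Option S) (x : ℕ → S) : Prop :=
  (∀ F : Finset ℕ, F.Nonempty → (fsum P x F).isSome = true) ∧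
  (∀ F : Finset S, F.Nonempty → ∃ m : ℕ, FSfrom P x m ⊆ sigma P F)

/-- `δS ⊆ βS`. -/
def deltaS (P : S → S → Option S) : Set (Ultrafilter S) :=
  {p | ∀ s : S, phi P s ∈ p}

/-- `-x + A = {y ∈ φ(x) : x + y ∈ A}`. -/
def shift (P : S → S → Option S) (x : S) (A : Set S) : Set S :=
  {y | ∃ z ∈ A, P x y = some z}

/-- `IsSum P r p q` expresses that `r = p + q` in `δS`:
`A ∈ p + q` iff `{x : -x + A ∈ q} ∈ p`. -/
def IsSum (P : S → S → Option S) (r p q : Ultrafilter S) : Prop :=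
  ∀ A : Set S, A ∈ r ↔ {x : S | shift P x A ∈ q} ∈ p

/-- A finite product subsystem `⟨y_n⟩_{n<m}` of `FS(⟨x_n⟩_{n=k}^∞)`. -/
def IsProdSubsysFin (P : S → S → Option S) (x : ℕ → S) (k m : ℕ) (y : ℕ → S) : Prop :=
  ∃ H : ℕ → Finset ℕ,
    (∀ n < m, (H n).Nonempty) ∧
    (∀ t ∈ H 0, k ≤ t) ∧
    (∀ n, n + 1 < m → ∀ s ∈ H n, ∀ t ∈ H (n + 1), s < t) ∧
    (∀ n < m, fsum P x (H n) = some (y n))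

/-- An infinite product subsystem `⟨y_n⟩_{n=0}^∞` of `FS(⟨x_n⟩_{n=k}^∞)`. -/
def IsProdSubsysInf (P : S → S → Option S) (x : ℕ → S) (k : ℕ) (y : ℕ → S) : Prop :=
  ∃ H : ℕ → Finset ℕ,
    (∀ n, (H n).Nonempty) ∧
    (∀ t ∈ H 0, k ≤ t) ∧
    (∀ n, ∀ s ∈ H n, ∀ t ∈ H (n + 1), s < t) ∧
    (∀ n, fsum P x (H n) = some (y n))

/-- `⟨x_n⟩_{n<m}` is a weak product subsystem of `⟨y_n⟩_{n=k}^∞`, witnessed by `H`. -/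
def IsWPSWith (P : S → S → Option S) (y : ℕ → S) (k m : ℕ) (x : ℕ → S)
    (H : ℕ → Finset ℕ) : Prop :=
  (∀ n < m, (H n).Nonempty) ∧
  (∀ n < m, ∀ t ∈ H n, k ≤ t) ∧
  (∀ n₁ < m, ∀ n₂ < m, n₁ ≠ n₂ → Disjoint (H n₁) (H n₂)) ∧
  (∀ n < m, fsum P y (H n) = some (x n))

/-- `⟨x_n⟩_{n<m}` is a weak product subsystem of `⟨y_n⟩_{n=k}^∞`. -/
def IsWPS (P : S → S → Option S) (y : ℕ → S) (k m : ℕ) (x : ℕ → S) : Prop :=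
  ∃ H : ℕ → Finset ℕ, IsWPSWith P y k m x H

/-- The coordinatewise partial operation on a finite product, defined exactly when
every coordinate operation is defined. -/
def prodOp {l : ℕ} {T : Fin l → Type*} (P : ∀ i, T i → T i → Option (T i)) :
    (∀ i, T i) → (∀ i, T i) → Option (∀ i, T i) := fun a b =>
  if h : ∀ i, (P i (a i) (b i)).isSome then
    some fun i => (P i (a i) (b i)).get (h i)
  else none

end PS

namespace Statement6Aux

open PS

theorem eq_some_getD {α : Type*} {o : Option α} (h : o.isSome = true) (d : α) :
    o = some (o.getD d) := by
  cases o with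
  | none => simp at h
  | some a => rfl

section fsumLemmas

variable {S : Type*} (P : S → S → Option S)

theorem fsum_singleton (y : ℕ → S) (t : ℕ) : fsum P y {t} = some (y t) := by
  simp [fsum, Finset.sort_singleton, listSum]

theorem fsum_insert_min (y : ℕ → S) {H : Finset ℕ} (hH : H.Nonempty) {t : ℕ}
    (htH : t ∉ H) (ht : ∀ s ∈ H, t ≤ s) :
    fsum P y (insert t H) = (fsum P y H).bind fun b => P (y t) b := by
  have hne : (H.sort (· ≤ ·)) ≠ [] := by
    obtain ⟨s0, hs0⟩ := hH
    intro h
    have hmem := (Finset.mem_sort (α := ℕ) (· ≤ ·)).2 hs0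
    rw [h] at hmem
    simp at hmem
  obtain ⟨c, L, hcl⟩ := List.exists_cons_of_ne_nil hne
  unfold fsum
  rw [Finset.sort_insert (r := (· ≤ ·)) ht htH, hcl]
  rfl

/-- Additivity of `fsum` over disjoint unions, given associativity and commutativity. -/
theorem fsum_union (hP : Assoc P) (hc : Comm P) (y : ℕ → S)
    (hy1 : ∀ F : Finset ℕ, F.Nonempty → (fsum P y F).isSome = true) :
    ∀ (F G : Finset ℕ), F.Nonempty → G.Nonempty → Disjoint F G → ∀ a b : S,
      fsum P y F = some a → fsum P y G = some b → P a b = fsum P y (F ∪ G) := by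
  suffices H : ∀ (k : ℕ) (F G : Finset ℕ), (F ∪ G).card ≤ k → F.Nonempty → G.Nonempty →
      Disjoint F G → ∀ a b : S,
      fsum P y F = some a → fsum P y G = some b → P a b = fsum P y (F ∪ G) by
    exact fun F G hF hG hd a b h1 h2 => H ((F ∪ G).card) F G le_rfl hF hG hd a b h1 h2
  intro k
  induction k with
  | zero =>
    intro F G hcard hF hG
    exfalso
    have h1 : (F ∪ G).Nonempty := hF.mono Finset.subset_union_left
    have := Finset.card_pos.mpr h1
    omega
  | succ k ih =>
    intro F G hcard hF hG hd a b ha hb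
    have hFG : (F ∪ G).Nonempty := hF.mono Finset.subset_union_left
    obtain ⟨t, htmem, htle⟩ : ∃ t, t ∈ F ∪ G ∧ ∀ s ∈ F ∪ G, t ≤ s :=
      ⟨(F ∪ G).min' hFG, Finset.min'_mem _ _, fun s hs => Finset.min'_le _ s hs⟩
    rcases Finset.mem_union.mp htmem with htF | htG
    · -- t ∈ F
      have htG : t ∉ G := fun h => (Finset.disjoint_left.mp hd htF) h
      have hFins : F = insert t (F.erase t) := (Finset.insert_erase htF).symm
      have htF' : t ∉ F.erase t := Finset.notMem_erase _ _
      rcases Finset.eq_empty_or_nonempty (F.erase t) with hF'e | hF'ne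
      · -- F = {t}
        have hFsing : F = {t} := by rw [hFins, hF'e]; simp
        have ha' : a = y t := by
          rw [hFsing, fsum_singleton] at ha
          exact (Option.some_inj.mp ha).symm
        have hun : F ∪ G = insert t G := by rw [hFsing]; exact (Finset.insert_eq _ _).symm
        rw [hun, fsum_insert_min P y hG htG (fun s hs => htle s (Finset.mem_union_right _ hs)),
          hb, ha']
        rfl
      · -- F.erase t nonempty
        have hFle : ∀ s ∈ F.erase t, t ≤ s := fun s hs =>
          htle s (Finset.mem_union_left _ (Finset.mem_of_mem_erase hs))
        obtain ⟨a', ha'⟩ := Option.isSome_iff_exists.mp (hy1 _ hF'ne)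
        have hya : P (y t) a' = some a := by
          rw [← ha]
          conv_rhs => rw [hFins]
          rw [fsum_insert_min P y hF'ne htF' hFle, ha']
          rfl
        have hd' : Disjoint (F.erase t) G := hd.mono_left (Finset.erase_subset _ _)
        have hcard' : ((F.erase t) ∪ G).card ≤ k := by
          have h1 : (F.erase t) ∪ G = (F ∪ G).erase t := by
            rw [Finset.erase_union_distrib, Finset.erase_eq_of_notMem htG]
          have := Finset.card_erase_of_mem htmem
          rw [h1]
          omega
        have hIH := ih (F.erase t) G hcard' hF'ne hG hd' a' b ha' hb
        obtain ⟨c', hc'⟩ := Option.isSome_iff_exists.mp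
          (hy1 ((F.erase t) ∪ G) (hF'ne.mono Finset.subset_union_left))
        have hunions : F ∪ G = insert t ((F.erase t) ∪ G) := by
          conv_lhs => rw [hFins]
          rw [Finset.insert_union]
        have htnotin : t ∉ (F.erase t) ∪ G := by
          rw [Finset.mem_union]
          rintro (h | h)
          · exact htF' h
          · exact htG h
        have htle' : ∀ s ∈ (F.erase t) ∪ G, t ≤ s := by
          intro s hs
          rcases Finset.mem_union.mp hs with h | h
          · exact hFle s h
          · exact htle s (Finset.mem_union_right _ h)
        have hfinal : fsum P y (F ∪ G) = (fsum P y ((F.erase t) ∪ G)).bind fun z => P (y t) z := by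
          rw [hunions]
          exact fsum_insert_min P y (hF'ne.mono Finset.subset_union_left) htnotin htle'
        have hab : P a' b = some c' := hIH.trans hc'
        have hassoc := hP (y t) a' b
        rw [hya, hab] at hassoc
        simp only [Option.bind_some] at hassoc
        rw [hfinal, hc']
        simp only [Option.bind_some]
        exact hassoc
    · -- t ∈ G
      have htF : t ∉ F := fun h => (Finset.disjoint_left.mp hd h) htG
      have hGins : G = insert t (G.erase t) := (Finset.insert_erase htG).symm
      have htG' : t ∉ G.erase t := Finset.notMem_erase _ _
      rcases Finset.eq_empty_or_nonempty (G.erase t) with hG'e | hG'ne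
      · -- G = {t}
        have hGsing : G = {t} := by rw [hGins, hG'e]; simp
        have hb' : b = y t := by
          rw [hGsing, fsum_singleton] at hb
          exact (Option.some_inj.mp hb).symm
        have hun : F ∪ G = insert t F := by
          rw [hGsing, Finset.union_comm]
          exact (Finset.insert_eq _ _).symm
        rw [hun, fsum_insert_min P y hF htF (fun s hs => htle s (Finset.mem_union_left _ hs)),
          ha, hb']
        simp only [Option.bind_some]
        exact hc a (y t)
      · -- G.erase t nonempty
        have hGle : ∀ s ∈ G.erase t, t ≤ s := fun s hs =>
          htle s (Finset.mem_union_right _ (Finset.mem_of_mem_erase hs))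
        obtain ⟨b', hb'⟩ := Option.isSome_iff_exists.mp (hy1 _ hG'ne)
        have hyb : P (y t) b' = some b := by
          rw [← hb]
          conv_rhs => rw [hGins]
          rw [fsum_insert_min P y hG'ne htG' hGle, hb']
          rfl
        have hd' : Disjoint F (G.erase t) := hd.mono_right (Finset.erase_subset _ _)
        have hcard' : (F ∪ (G.erase t)).card ≤ k := by
          have h1 : F ∪ (G.erase t) = (F ∪ G).erase t := by
            rw [Finset.erase_union_distrib, Finset.erase_eq_of_notMem htF]
          have := Finset.card_erase_of_mem htmem
          rw [h1]
          omega
        have hIH := ih F (G.erase t) hcard' hF hG'ne hd' a b' ha hb'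
        obtain ⟨c', hc'⟩ := Option.isSome_iff_exists.mp
          (hy1 (F ∪ (G.erase t)) (hF.mono Finset.subset_union_left))
        have hunions : F ∪ G = insert t (F ∪ (G.erase t)) := by
          conv_lhs => rw [hGins]
          rw [Finset.union_insert]
        have htnotin : t ∉ F ∪ (G.erase t) := by
          rw [Finset.mem_union]
          rintro (h | h)
          · exact htF h
          · exact htG' h
        have htle' : ∀ s ∈ F ∪ (G.erase t), t ≤ s := by
          intro s hs
          rcases Finset.mem_union.mp hs with h | h
          · exact htle s (Finset.mem_union_left _ h)
          · exact hGle s h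
        have hfinal : fsum P y (F ∪ G) = (fsum P y (F ∪ (G.erase t))).bind fun z => P (y t) z := by
          rw [hunions]
          exact fsum_insert_min P y (hF.mono Finset.subset_union_left) htnotin htle'
        have hab2 : P a b' = some c' := hIH.trans hc'
        have h1 := hP a (y t) b'
        rw [hyb, hc a (y t)] at h1
        simp only [Option.bind_some] at h1
        -- h1 : (P (y t) a).bind (fun z => P z b') = P a b
        have h2 := hP (y t) a b'
        rw [hab2] at h2
        simp only [Option.bind_some] at h2
        -- h2 : (P (y t) a).bind (fun z => P z b') = P (y t) c'
        rw [hfinal, hc']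
        simp only [Option.bind_some]
        rw [← h1, h2]

end fsumLemmas

section fsumBlocks

variable {S : Type*} (P : S → S → Option S)

/-- Sums of block-sums: `fsum` of the sequence `x` of block values equals `fsum` of `y`
over the union of the blocks. -/
theorem fsum_of_blocks (hP : Assoc P) (hc : Comm P) (y : ℕ → S)
    (hy1 : ∀ F : Finset ℕ, F.Nonempty → (fsum P y F).isSome = true)
    (x : ℕ → S) (Qf : ℕ → Finset ℕ) (m : ℕ)
    (hne : ∀ n, n < m → (Qf n).Nonempty)
    (hdis : ∀ n₁, n₁ < m → ∀ n₂, n₂ < m → n₁ ≠ n₂ → Disjoint (Qf n₁) (Qf n₂))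
    (hx : ∀ n, n < m → fsum P y (Qf n) = some (x n)) :
    ∀ K : Finset ℕ, K.Nonempty → (∀ n ∈ K, n < m) →
      fsum P x K = fsum P y (K.biUnion Qf) := by
  suffices H : ∀ (k : ℕ) (K : Finset ℕ), K.card ≤ k → K.Nonempty → (∀ n ∈ K, n < m) →
      fsum P x K = fsum P y (K.biUnion Qf) by
    exact fun K h1 h2 => H K.card K le_rfl h1 h2
  intro k
  induction k with
  | zero =>
    intro K hcard hK
    exfalso
    have := Finset.card_pos.mpr hK
    omega
  | succ k ih =>
    intro K hcard hK hbound
    obtain ⟨t, htmem, htle⟩ : ∃ t, t ∈ K ∧ ∀ s ∈ K, t ≤ s :=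
      ⟨K.min' hK, Finset.min'_mem _ _, fun s hs => Finset.min'_le _ s hs⟩
    have htm : t < m := hbound t htmem
    have hKins : K = insert t (K.erase t) := (Finset.insert_erase htmem).symm
    rcases Finset.eq_empty_or_nonempty (K.erase t) with hKe | hKne
    · -- K = {t}
      have hKsing : K = {t} := by rw [hKins, hKe]; simp
      rw [hKsing, fsum_singleton, Finset.singleton_biUnion, hx t htm]
    · -- K.erase t nonempty
      have hKle : ∀ s ∈ K.erase t, t ≤ s := fun s hs =>
        htle s (Finset.mem_of_mem_erase hs)
      have hbound' : ∀ n ∈ K.erase t, n < m := fun n hn =>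
        hbound n (Finset.mem_of_mem_erase hn)
      have hcard' : (K.erase t).card ≤ k := by
        have := Finset.card_erase_of_mem htmem
        omega
      have hIH := ih (K.erase t) hcard' hKne hbound'
      have hxK : fsum P x K = (fsum P x (K.erase t)).bind fun b => P (x t) b := by
        conv_lhs => rw [hKins]
        exact fsum_insert_min P x hKne (Finset.notMem_erase _ _) hKle
      -- the union of blocks over `K.erase t` :
      have hAne : ((K.erase t).biUnion Qf).Nonempty := by
        obtain ⟨n0, hn0⟩ := hKne
        exact Finset.Nonempty.mono
          (Finset.subset_biUnion_of_mem Qf hn0) (hne n0 (hbound' n0 hn0))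
      obtain ⟨v, hv⟩ := Option.isSome_iff_exists.mp (hy1 _ hAne)
      have hQtA : Disjoint (Qf t) ((K.erase t).biUnion Qf) := by
        rw [Finset.disjoint_biUnion_right]
        intro n hn
        exact hdis t htm n (hbound' n hn) (fun h => (Finset.notMem_erase n K) (h ▸ hn))
      have hADD := fsum_union P hP hc y hy1 (Qf t) ((K.erase t).biUnion Qf)
        (hne t htm) hAne hQtA (x t) v (hx t htm) hv
      have hbiu : K.biUnion Qf = Qf t ∪ (K.erase t).biUnion Qf := by
        conv_lhs => rw [hKins]
        rw [Finset.biUnion_insert]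
      rw [hxK, hIH, hv, hbiu, ← hADD]
      rfl

end fsumBlocks

/-! ### The grid semilattice -/

/-- A grid of finite subsets of `ℕ`, indexed by a coordinate `i < l` and a slot `n < m`. -/
structure SGrid (l m : ℕ) : Type where
  marks : Fin l → Fin m → Finset ℕ

namespace SGrid

variable {l m : ℕ}

theorem ext' {Q R : SGrid l m} (h : Q.marks = R.marks) : Q = R := by
  cases Q; cases R; simpa using h

instance : Semigroup (SGrid l m) where
  mul Q R := ⟨fun i n => Q.marks i n ∪ R.marks i n⟩
  mul_assoc Q R T := by
    apply ext'
    funext i n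
    exact Finset.union_assoc _ _ _

@[simp] theorem mul_marks (Q R : SGrid l m) (i : Fin l) (n : Fin m) :
    (Q * R).marks i n = Q.marks i n ∪ R.marks i n := rfl

/-- The generator value `g t i n`. -/
def gval (l m t : ℕ) (i : Fin l) (n : Fin m) : ℕ := t * (l * m) + ((i : ℕ) * m + (n : ℕ))

/-- The stream of generators. -/
def genS (l m : ℕ) : Stream' (SGrid l m) := fun t => ⟨fun i n => {gval l m t i n}⟩

theorem base_lt (i : Fin l) (n : Fin m) : (i : ℕ) * m + (n : ℕ) < l * m := by
  have h1 : (n : ℕ) < m := n.is_lt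
  have h2 : (i : ℕ) + 1 ≤ l := i.is_lt
  calc (i : ℕ) * m + (n : ℕ) < (i : ℕ) * m + m := by omega
  _ = ((i : ℕ) + 1) * m := by ring
  _ ≤ l * m := Nat.mul_le_mul_right m h2

theorem le_gval (t : ℕ) (i : Fin l) (n : Fin m) (h : 0 < l * m) : t ≤ gval l m t i n := by
  have : t ≤ t * (l * m) := Nat.le_mul_of_pos_right t h
  unfold gval
  omega

theorem unique_mul_add {L t r t' r' : ℕ} (hr : r < L) (hr' : r' < L)
    (h : t * L + r = t' * L + r') : t = t' ∧ r = r' := by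
  have hL : 0 < L := Nat.pos_of_ne_zero (by omega)
  have e1 : ∀ (u v : ℕ), v < L → (u * L + v) % L = v := by
    intro u v hv
    rw [Nat.add_comm, Nat.add_mul_mod_self_right, Nat.mod_eq_of_lt hv]
  have e2 : ∀ (u v : ℕ), v < L → (u * L + v) / L = u := by
    intro u v hv
    rw [Nat.add_comm, Nat.add_mul_div_right _ _ hL, Nat.div_eq_of_lt hv, Nat.zero_add]
  constructor
  · rw [← e2 t r hr, ← e2 t' r' hr', h]
  · rw [← e1 t r hr, ← e1 t' r' hr', h]

theorem gval_inj {t t' : ℕ} {i i' : Fin l} {n n' : Fin m}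
    (h : gval l m t i n = gval l m t' i' n') : t = t' ∧ i = i' ∧ n = n' := by
  obtain ⟨h1, h2⟩ := unique_mul_add (base_lt i n) (base_lt i' n') h
  obtain ⟨h3, h4⟩ := unique_mul_add (n.is_lt) (n'.is_lt) h2
  exact ⟨h1, Fin.ext h3, Fin.ext h4⟩

/-- Structure of the elements of `FP` of the generator stream. -/
theorem fp_struct (b : Stream' (SGrid l m)) (Q : SGrid l m) (hQ : Q ∈ Hindman.FP b) :
    ∀ N : ℕ, b = (genS l m).drop N →
    ∃ F : Finset ℕ, F.Nonempty ∧ (∀ t ∈ F, N ≤ t) ∧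
      ∀ i n, Q.marks i n = F.image fun t => gval l m t i n := by
  induction hQ with
  | head' a =>
    intro N hN
    refine ⟨{N}, Finset.singleton_nonempty _, by simp, fun i n => ?_⟩
    rw [hN]
    show ((genS l m).drop N).head.marks i n = _
    rw [Stream'.head_drop]
    simp [genS, Stream'.get]
  | tail' a Q h ihQ =>
    intro N hN
    have htl : a.tail = (genS l m).drop (N + 1) := by
      rw [hN, Stream'.tail_eq_drop, Stream'.drop_drop, Nat.add_comm]
    obtain ⟨F, h1, h2, h3⟩ := ihQ (N + 1) htl
    exact ⟨F, h1, fun t ht => Nat.le_of_succ_le (h2 t ht), h3⟩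
  | cons' a Q h ihQ =>
    intro N hN
    have htl : a.tail = (genS l m).drop (N + 1) := by
      rw [hN, Stream'.tail_eq_drop, Stream'.drop_drop, Nat.add_comm]
    obtain ⟨F, h1, h2, h3⟩ := ihQ (N + 1) htl
    refine ⟨insert N F, Finset.insert_nonempty _ _, ?_, fun i n => ?_⟩
    · intro t ht
      rcases Finset.mem_insert.mp ht with rfl | ht
      · exact le_refl _
      · exact Nat.le_of_succ_le (h2 t ht)
    · rw [Finset.image_insert]
      show (a.head * Q).marks i n = _
      rw [mul_marks, h3 i n, hN, Stream'.head_drop]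
      show ({gval l m N i n} : Finset ℕ) ∪ _ = _
      rw [Finset.insert_eq]

end SGrid

/-! ### An idempotent ultrafilter containing all `FP`-tails -/

theorem exists_idem_tails {M : Type*} [Semigroup M] (a : Stream' M) :
    ∃ U : Ultrafilter M, U * U = U ∧ ∀ n, ∀ᶠ (q : M) in (U : Filter M), q ∈ Hindman.FP (a.drop n) := by
  let S : Set (Ultrafilter M) := ⋂ n, { U | ∀ᶠ (q : M) in U, q ∈ Hindman.FP (a.drop n) }
  have h := exists_idempotent_in_compact_subsemigroup ?_ S ?_ ?_ ?_
  · rcases h with ⟨U, hU, U_idem⟩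
    exact ⟨U, U_idem, fun n => Set.mem_iInter.mp hU n⟩
  · exact Ultrafilter.continuous_mul_left
  · apply IsCompact.nonempty_iInter_of_sequence_nonempty_isCompact_isClosed
    · intro n U hU
      apply Filter.Eventually.mono hU
      intro q hq
      rw [← Stream'.drop_drop, ← Stream'.tail_eq_drop] at hq
      exact Hindman.FP.tail _ _ hq
    · intro n
      exact ⟨pure _, Filter.mem_pure.mpr <| Hindman.FP.head _⟩
    · exact (ultrafilter_isClosed_basic _).isCompact
    · intro n
      apply ultrafilter_isClosed_basic
  · exact IsClosed.isCompact (isClosed_iInter fun i => ultrafilter_isClosed_basic _)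
  · intro U hU V hV
    rw [Set.mem_iInter] at *
    intro n
    rw [Set.mem_setOf_eq, Ultrafilter.eventually_mul]
    apply Filter.Eventually.mono (hU n)
    intro q hq
    obtain ⟨n', hn⟩ := Hindman.FP.mul hq
    apply Filter.Eventually.mono (hV (n + n'))
    intro q' hq'
    apply hn
    simpa only [Stream'.drop_drop] using hq'

/-! ### Set-up for the main proof -/

/-- Structural property of elements of `FP` of the generator stream:
a grid all of whose marks are images of one finite set of generator indices. -/
def Good {l m : ℕ} (N : ℕ) (Q : SGrid l m) : Prop :=
  ∃ F : Finset ℕ, F.Nonempty ∧ (∀ t ∈ F, N ≤ t) ∧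
    ∀ i n, Q.marks i n = F.image fun t => SGrid.gval l m t i n

theorem Good.ne {l m N : ℕ} {Q : SGrid l m} (h : Good N Q) (i : Fin l) (n : Fin m) :
    (Q.marks i n).Nonempty := by
  obtain ⟨F, hF, _, h3⟩ := h
  rw [h3 i n]
  exact hF.image _

theorem Good.ge {l m N : ℕ} (hlm : 0 < l * m) {Q : SGrid l m} (h : Good N Q) (i : Fin l)
    (n : Fin m) (x : ℕ) (hx : x ∈ Q.marks i n) : N ≤ x := by
  obtain ⟨F, hF, h2, h3⟩ := h
  rw [h3 i n] at hx
  obtain ⟨t, ht, rfl⟩ := Finset.mem_image.mp hx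
  exact le_trans (h2 t ht) (SGrid.le_gval t i n hlm)

theorem Good.dis {l m N : ℕ} {Q : SGrid l m} (h : Good N Q) (i : Fin l) {n n' : Fin m}
    (hnn : n ≠ n') : Disjoint (Q.marks i n) (Q.marks i n') := by
  obtain ⟨F, hF, _, h3⟩ := h
  rw [h3 i n, h3 i n', Finset.disjoint_left]
  rintro x hx hx'
  obtain ⟨t, ht, rfl⟩ := Finset.mem_image.mp hx
  obtain ⟨t', ht', heq⟩ := Finset.mem_image.mp hx'
  exact hnn (SGrid.gval_inj heq.symm).2.2

/-- A strict upper bound for all marks of a grid. -/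
def bnd {l m : ℕ} (Q : SGrid l m) : ℕ :=
  (Finset.univ.sup fun i : Fin l => Finset.univ.sup fun n : Fin m => (Q.marks i n).sup id) + 1

theorem lt_bnd {l m : ℕ} (Q : SGrid l m) (i : Fin l) (n : Fin m) (x : ℕ)
    (hx : x ∈ Q.marks i n) : x < bnd Q := by
  have h1 : x ≤ (Q.marks i n).sup id := Finset.le_sup (f := id) hx
  have h2 : (Q.marks i n).sup id ≤ Finset.univ.sup fun n : Fin m => (Q.marks i n).sup id :=
    Finset.le_sup (f := fun n : Fin m => (Q.marks i n).sup id) (Finset.mem_univ n)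
  have h3 : (Finset.univ.sup fun n : Fin m => (Q.marks i n).sup id) ≤
      Finset.univ.sup fun i : Fin l => Finset.univ.sup fun n : Fin m => (Q.marks i n).sup id :=
    Finset.le_sup (f := fun i : Fin l => Finset.univ.sup fun n : Fin m => (Q.marks i n).sup id)
      (Finset.mem_univ i)
  unfold bnd
  omega

/-- The value of a grid under a selection pattern `K`. -/
def selVal {l m : ℕ} {S : Fin l → Type*} (P : ∀ i, S i → S i → Option (S i))
    (y : ∀ i, ℕ → S i) (K : ∀ i : Fin l, Finset (Fin m)) (Q : SGrid l m) (i : Fin l) : S i :=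
  (PS.fsum (P i) (y i) ((K i).biUnion fun n => Q.marks i n)).getD (y i 0)

theorem mem_iff_eventually {α : Type*} (W : Ultrafilter α) (s : Set α) :
    s ∈ W ↔ ∀ᶠ x in (W : Filter α), x ∈ s := Iff.rfl

/-- The selection value map is a homomorphism on pairs of mark-disjoint grids. -/
theorem key_mul {l m : ℕ} {S : Fin l → Type*} (P : ∀ i, S i → S i → Option (S i))
    (hassoc : ∀ i, PS.Assoc (P i)) (hcomm : ∀ i, PS.Comm (P i))
    (y : ∀ i, ℕ → S i)
    (hy1 : ∀ i (F : Finset ℕ), F.Nonempty → (PS.fsum (P i) (y i) F).isSome = true)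
    (K : ∀ i : Fin l, Finset (Fin m)) (hK : ∀ i, (K i).Nonempty)
    (Q R : SGrid l m)
    (hQne : ∀ i n, (Q.marks i n).Nonempty) (hRne : ∀ i n, (R.marks i n).Nonempty)
    (hQR : ∀ (i : Fin l) (n n' : Fin m), Disjoint (Q.marks i n) (R.marks i n')) :
    PS.prodOp P (selVal P y K Q) (selVal P y K R) = some (selVal P y K (Q * R)) := by
  have hAQne : ∀ i, (((K i).biUnion fun n => Q.marks i n)).Nonempty := by
    intro i
    obtain ⟨n, hn⟩ := hK i
    exact Finset.Nonempty.mono (Finset.subset_biUnion_of_mem _ hn) (hQne i n)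
  have hARne : ∀ i, (((K i).biUnion fun n => R.marks i n)).Nonempty := by
    intro i
    obtain ⟨n, hn⟩ := hK i
    exact Finset.Nonempty.mono (Finset.subset_biUnion_of_mem _ hn) (hRne i n)
  have hAQR : ∀ i, ((K i).biUnion fun n => (Q * R).marks i n)
      = ((K i).biUnion fun n => Q.marks i n) ∪ ((K i).biUnion fun n => R.marks i n) := by
    intro i
    ext x
    simp only [Finset.mem_biUnion, Finset.mem_union, SGrid.mul_marks]
    constructor
    · rintro ⟨n, hn, hx | hx⟩
      · exact Or.inl ⟨n, hn, hx⟩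
      · exact Or.inr ⟨n, hn, hx⟩
    · rintro (⟨n, hn, hx⟩ | ⟨n, hn, hx⟩)
      · exact ⟨n, hn, Or.inl hx⟩
      · exact ⟨n, hn, Or.inr hx⟩
  have hdisj : ∀ i, Disjoint ((K i).biUnion fun n => Q.marks i n)
      ((K i).biUnion fun n => R.marks i n) := by
    intro i
    rw [Finset.disjoint_left]
    intro x hx hx'
    obtain ⟨n, hn, hxn⟩ := Finset.mem_biUnion.mp hx
    obtain ⟨n', hn', hxn'⟩ := Finset.mem_biUnion.mp hx'
    exact (Finset.disjoint_left.mp (hQR i n n')) hxn hxn'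
  have hcomp : ∀ i, P i (selVal P y K Q i) (selVal P y K R i)
      = some (selVal P y K (Q * R) i) := by
    intro i
    have hQv : PS.fsum (P i) (y i) ((K i).biUnion fun n => Q.marks i n)
        = some (selVal P y K Q i) := eq_some_getD (hy1 i _ (hAQne i)) _
    have hRv : PS.fsum (P i) (y i) ((K i).biUnion fun n => R.marks i n)
        = some (selVal P y K R i) := eq_some_getD (hy1 i _ (hARne i)) _
    have hADD := fsum_union (P i) (hassoc i) (hcomm i) (y i) (hy1 i) _ _
      (hAQne i) (hARne i) (hdisj i) _ _ hQv hRv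
    rw [← hAQR i] at hADD
    rw [hADD]
    have hQRne : (((K i).biUnion fun n => (Q * R).marks i n)).Nonempty := by
      rw [hAQR i]
      exact Finset.Nonempty.mono Finset.subset_union_left (hAQne i)
    exact eq_some_getD (hy1 i _ hQRne) _
  have hsome : ∀ i, (P i (selVal P y K Q i) (selVal P y K R i)).isSome := by
    intro i
    rw [hcomp i]
    rfl
  unfold PS.prodOp
  rw [dif_pos hsome]
  congr 1
  funext i
  apply Option.some_injective
  rw [Option.some_get, hcomp i]

end Statement6Aux

/-- If `C` is an `IP*` set in `S_1 × ⋯ × S_l` (i.e. `C` belongs to every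
idempotent ultrafilter in `δ(S_1 × ⋯ × S_l)`) and `m ∈ ℕ`, then there are weak product
subsystems `⟨x_{i,n}⟩_{n=1}^m` of `⟨y_{i,n}⟩_{n=1}^∞` with
`×_{i=1}^l FS(⟨x_{i,n}⟩_{n=1}^m) ⊆ C`. -/
theorem statement6 {l : ℕ} {S : Fin l → Type*} [∀ i, Countable (S i)]
    (P : ∀ i, S i → S i → Option (S i))
    (hassoc : ∀ i, PS.Assoc (P i)) (hcomm : ∀ i, PS.Comm (P i))
    (hadeq : ∀ i, PS.Adequate (P i))
    (y : ∀ i, ℕ → S i) (hy : ∀ i, PS.AdequateSeq (P i) (y i))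
    (C : Set (∀ i, S i))
    (hC : ∀ p : Ultrafilter (∀ i, S i), p ∈ PS.deltaS (PS.prodOp P) →
      PS.IsSum (PS.prodOp P) p p p → C ∈ p)
    (m : ℕ) :
    ∃ x : ∀ i, ℕ → S i,
      (∀ i, PS.IsWPS (P i) (y i) 0 m (x i)) ∧
      {f : ∀ i, S i | ∀ i, f i ∈ PS.FSfin (P i) (x i) m} ⊆ C := by
  classical
  rcases Nat.eq_zero_or_pos l with rfl | hl
  · -- the case `l = 0` : the product is a one-point space
    refine ⟨y, fun i => i.elim0, fun f _ => ?_⟩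
    have huniq : ∀ g h : (∀ i : Fin 0, S i), g = h := fun g h => funext fun i => i.elim0
    have hpone : ∀ s t : (∀ i : Fin 0, S i), PS.prodOp P s t = some t := by
      intro s t
      have hh : ∀ i : Fin 0, (P i (s i) (t i)).isSome := fun i => i.elim0
      unfold PS.prodOp
      rw [dif_pos hh]
      exact congrArg some (huniq _ _)
    have h1 : (pure f : Ultrafilter (∀ i : Fin 0, S i)) ∈ PS.deltaS (PS.prodOp P) := by
      intro s
      rw [Ultrafilter.mem_pure]
      show (PS.prodOp P s f).isSome = true
      rw [hpone]
      rfl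
    have h2 : PS.IsSum (PS.prodOp P) (pure f) (pure f) (pure f) := by
      intro A
      rw [Ultrafilter.mem_pure, Ultrafilter.mem_pure, Set.mem_setOf_eq, Ultrafilter.mem_pure]
      constructor
      · intro hA
        exact ⟨f, hA, hpone f f⟩
      · rintro ⟨z, hz, hzz⟩
        rw [hpone] at hzz
        have : f = z := Option.some_inj.mp hzz
        rw [this]
        exact hz
    have := hC (pure f) h1 h2
    rwa [Ultrafilter.mem_pure] at this
  rcases Nat.eq_zero_or_pos m with rfl | hm
  · -- the case `m = 0`
    refine ⟨y, fun i => ⟨fun _ => (∅ : Finset ℕ),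
      fun n hn => absurd hn (Nat.not_lt_zero n),
      fun n hn => absurd hn (Nat.not_lt_zero n),
      fun n₁ hn => absurd hn (Nat.not_lt_zero n₁),
      fun n hn => absurd hn (Nat.not_lt_zero n)⟩, ?_⟩
    intro f hf
    exfalso
    obtain ⟨Hs, hne, hsub, -⟩ := hf ⟨0, hl⟩
    rw [Finset.range_zero, Finset.subset_empty] at hsub
    exact hne.ne_empty hsub
  -- main case : `0 < l` and `0 < m`
  obtain ⟨U, hUidem, hUtail⟩ := Statement6Aux.exists_idem_tails (Statement6Aux.SGrid.genS l m)
  have hlm : 0 < l * m := Nat.mul_pos hl hm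
  have hy1 : ∀ i, ∀ F : Finset ℕ, F.Nonempty → (PS.fsum (P i) (y i) F).isSome = true :=
    fun i => (hy i).1
  have hGOOD : ∀ N, ∀ᶠ Q in (U : Filter (Statement6Aux.SGrid l m)), Statement6Aux.Good N Q :=
    fun N => Filter.Eventually.mono (hUtail N)
      (fun Q hQ => Statement6Aux.SGrid.fp_struct _ Q hQ N rfl)
  -- all the pushed-forward ultrafilters are in `δ(∏ S i)`
  have hdelta : ∀ (K : ∀ i : Fin l, Finset (Fin m)), (∀ i, (K i).Nonempty) →
      (U.map (Statement6Aux.selVal P y K)) ∈ PS.deltaS (PS.prodOp P) := by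
    intro K hK s
    rw [Ultrafilter.mem_map, Statement6Aux.mem_iff_eventually]
    have hNex : ∀ i, ∃ Ni, PS.FSfrom (P i) (y i) Ni ⊆ PS.sigma (P i) {s i} :=
      fun i => (hy i).2 {s i} (Finset.singleton_nonempty _)
    choose Ni hNi using hNex
    apply Filter.Eventually.mono (hGOOD (Finset.univ.sup Ni))
    intro Q hQ
    have hall : ∀ i, (P i (s i) (Statement6Aux.selVal P y K Q i)).isSome = true := by
      intro i
      have hAne : (((K i).biUnion fun n => Q.marks i n)).Nonempty := by
        obtain ⟨n, hn⟩ := hK i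
        exact Finset.Nonempty.mono (Finset.subset_biUnion_of_mem _ hn) (hQ.ne i n)
      have hmem : Statement6Aux.selVal P y K Q i ∈ PS.FSfrom (P i) (y i) (Ni i) := by
        refine ⟨(K i).biUnion fun n => Q.marks i n, hAne, ?_, ?_⟩
        · intro t ht
          obtain ⟨n, hn, htn⟩ := Finset.mem_biUnion.mp ht
          exact le_trans (Finset.le_sup (f := Ni) (Finset.mem_univ i))
            (hQ.ge hlm i n t htn)
        · exact Statement6Aux.eq_some_getD (hy1 i _ hAne) _
      exact hNi i hmem (s i) (Finset.mem_singleton_self (s i))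
    show (PS.prodOp P s (Statement6Aux.selVal P y K Q)).isSome = true
    unfold PS.prodOp
    rw [dif_pos hall]
    rfl
  -- all the pushed-forward ultrafilters are idempotent
  have hsum : ∀ (K : ∀ i : Fin l, Finset (Fin m)), (∀ i, (K i).Nonempty) →
      PS.IsSum (PS.prodOp P) (U.map (Statement6Aux.selVal P y K))
        (U.map (Statement6Aux.selVal P y K)) (U.map (Statement6Aux.selVal P y K)) := by
    intro K hK A
    rw [Ultrafilter.mem_map, Ultrafilter.mem_map]
    have hsetEq : (Statement6Aux.selVal P y K ⁻¹'
        {x | PS.shift (PS.prodOp P) x A ∈ U.map (Statement6Aux.selVal P y K)})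
        = {Q | Statement6Aux.selVal P y K ⁻¹'
            (PS.shift (PS.prodOp P) (Statement6Aux.selVal P y K Q) A) ∈ U} := by
      ext Q
      exact Ultrafilter.mem_map
    rw [hsetEq]
    have hL : (Statement6Aux.selVal P y K ⁻¹' A ∈ U) ↔
        (∀ᶠ Q in (U : Filter _), ∀ᶠ R in (U : Filter _),
          Statement6Aux.selVal P y K (Q * R) ∈ A) := by
      calc (Statement6Aux.selVal P y K ⁻¹' A ∈ U)
          ↔ (Statement6Aux.selVal P y K ⁻¹' A ∈ U * U) := by rw [hUidem]
        _ ↔ (∀ᶠ q in ((U * U : Ultrafilter _) : Filter _),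
              q ∈ Statement6Aux.selVal P y K ⁻¹' A) :=
            Statement6Aux.mem_iff_eventually _ _
        _ ↔ _ := Ultrafilter.eventually_mul U U _
    rw [hL, Statement6Aux.mem_iff_eventually]
    apply Filter.eventually_congr
    apply Filter.Eventually.mono (hGOOD 0)
    intro Q hQ
    rw [Set.mem_setOf_eq, Statement6Aux.mem_iff_eventually]
    apply Filter.eventually_congr
    apply Filter.Eventually.mono (hGOOD (Statement6Aux.bnd Q))
    intro R hR
    have hdisj : ∀ (i : Fin l) (n n' : Fin m), Disjoint (Q.marks i n) (R.marks i n') := by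
      intro i n n'
      rw [Finset.disjoint_left]
      intro x hx hx'
      have h1 := Statement6Aux.lt_bnd Q i n x hx
      have h2 := hR.ge hlm i n' x hx'
      omega
    have hkey := Statement6Aux.key_mul P hassoc hcomm y hy1 K hK Q R hQ.ne hR.ne hdisj
    constructor
    · intro h
      show Statement6Aux.selVal P y K R ∈ PS.shift (PS.prodOp P)
        (Statement6Aux.selVal P y K Q) A
      exact ⟨Statement6Aux.selVal P y K (Q * R), h, hkey⟩
    · intro h
      have h' : Statement6Aux.selVal P y K R ∈ PS.shift (PS.prodOp P)
          (Statement6Aux.selVal P y K Q) A := h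
      obtain ⟨z, hz, hzz⟩ := h'
      rw [hkey] at hzz
      rw [Option.some_inj.mp hzz]
      exact hz
  -- from `hC` : all selections of `U`-most grids land in `C`
  have hCmem : ∀ K : {K : ∀ i : Fin l, Finset (Fin m) // ∀ i, (K i).Nonempty},
      Statement6Aux.selVal P y K.1 ⁻¹' C ∈ U := fun K =>
    Ultrafilter.mem_map.mp
      (hC (U.map (Statement6Aux.selVal P y K.1)) (hdelta K.1 K.2) (hsum K.1 K.2))
  have hbig : ∀ᶠ Q in (U : Filter (Statement6Aux.SGrid l m)),
      (∀ K : {K : ∀ i : Fin l, Finset (Fin m) // ∀ i, (K i).Nonempty},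
        Statement6Aux.selVal P y K.1 Q ∈ C) ∧ Statement6Aux.Good 0 Q := by
    refine Filter.Eventually.and ?_ (hGOOD 0)
    rw [Filter.eventually_all]
    intro K
    exact (Statement6Aux.mem_iff_eventually _ _).mp (hCmem K)
  obtain ⟨Qs, hQC, hQgood⟩ := hbig.exists
  -- the final system
  refine ⟨fun i k => if h : k < m then
      (PS.fsum (P i) (y i) (Qs.marks i ⟨k, h⟩)).getD (y i 0) else y i 0, ?_, ?_⟩
  · intro i
    refine ⟨fun k => if h : k < m then Qs.marks i ⟨k, h⟩ else ∅, ?_, ?_, ?_, ?_⟩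
    · intro n hn
      simp only [dif_pos hn]
      exact hQgood.ne i ⟨n, hn⟩
    · intro n _ t _
      exact Nat.zero_le t
    · intro n₁ h₁ n₂ h₂ hne12
      simp only [dif_pos h₁, dif_pos h₂]
      exact hQgood.dis i (fun hh => hne12 (congrArg Fin.val hh))
    · intro n hn
      simp only [dif_pos hn]
      exact Statement6Aux.eq_some_getD (hy1 i _ (hQgood.ne i ⟨n, hn⟩)) _
  · intro f hf
    have hKex : ∀ i, ∃ K : Finset (Fin m), K.Nonempty ∧
        PS.fsum (P i) (y i) (K.biUnion fun n => Qs.marks i n) = some (f i) := by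
      intro i
      obtain ⟨Hs, hne, hsub, hval⟩ := hf i
      have hbound : ∀ n ∈ Hs, n < m := fun n hn => Finset.mem_range.mp (hsub hn)
      have hblocks := Statement6Aux.fsum_of_blocks (P i) (hassoc i) (hcomm i) (y i) (hy1 i)
        (fun k => if h : k < m then
          (PS.fsum (P i) (y i) (Qs.marks i ⟨k, h⟩)).getD (y i 0) else y i 0)
        (fun k => if h : k < m then Qs.marks i ⟨k, h⟩ else ∅) m
        (fun k hk => by simp only [dif_pos hk]; exact hQgood.ne i ⟨k, hk⟩)
        (fun k₁ h₁ k₂ h₂ hne12 => by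
          simp only [dif_pos h₁, dif_pos h₂]
          exact hQgood.dis i (fun hh => hne12 (congrArg Fin.val hh)))
        (fun k hk => by
          simp only [dif_pos hk]
          exact Statement6Aux.eq_some_getD (hy1 i _ (hQgood.ne i ⟨k, hk⟩)) _)
        Hs hne hbound
      refine ⟨Hs.attachFin hbound, ?_, ?_⟩
      · obtain ⟨n0, hn0⟩ := hne
        exact ⟨⟨n0, hbound n0 hn0⟩, (Finset.mem_attachFin hbound).mpr hn0⟩
      · have hbieq : ((Hs.attachFin hbound).biUnion fun n => Qs.marks i n)
            = Hs.biUnion (fun k => if h : k < m then Qs.marks i ⟨k, h⟩ else ∅) := by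
          ext x
          simp only [Finset.mem_biUnion, Finset.mem_attachFin]
          constructor
          · rintro ⟨n, hn, hx⟩
            refine ⟨(n : ℕ), hn, ?_⟩
            rw [dif_pos n.is_lt]
            simpa using hx
          · rintro ⟨k, hk, hx⟩
            have hkm : k < m := hbound k hk
            rw [dif_pos hkm] at hx
            exact ⟨⟨k, hkm⟩, hk, hx⟩
        rw [hbieq, ← hblocks]
        exact hval
    choose K hK1 hK2 using hKex
    have hfeq : f = Statement6Aux.selVal P y K Qs := by
      funext i
      show f i = (PS.fsum (P i) (y i) ((K i).biUnion fun n => Qs.marks i n)).getD (y i 0)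
      rw [hK2 i]
      rfl
    rw [hfeq]
    exact hQC ⟨K, hK1⟩
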